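/- In Kirchhoff's construction, for x ∈ S^{n+1} ⊂ ℝ^{n+2} written as x = αe + βy with α² + β² = 1, β ≥ 0, y ∈ S^n, the map σ_x = α·Id + β·J̃_y sends e to x, and sends every vector in ℝ^{n+1} (i.e., orthogonal to e) to a vector orthogonal to x. -/
import Mathlib


open scoped RealInnerProductSpace

/-- Kirchhoff's construction: for `x = α·e + β·y ∈ S^{n+1}` with
`α² + β² = 1`, `β ≥ 0`, `y ∈ Sⁿ` orthogonal to `e`, the map `σ_x = α·Id + β·J̃_y` sends
`e` to `x`, and sends every vector orthogonal to `e` (i.e. in `ℝ^{n+1}`) to a vector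
orthogonal to `x`. -/
theorem kirchhoff_stmt11 {n : ℕ}
    (e y : EuclideanSpace ℝ (Fin (n + 2)))
    (he : ‖e‖ = 1) (hy : ‖y‖ = 1) (hey : ⟪e, y⟫ = 0)
    (J : EuclideanSpace ℝ (Fin (n + 2)) →ₗ[ℝ] EuclideanSpace ℝ (Fin (n + 2)))
    (hJe : J e = y) (hJy : J y = -e)
    (horth : ∀ u v, ⟪J u, J v⟫ = ⟪u, v⟫)
    (hJ2 : ∀ v, J (J v) = -v)
    (α β : ℝ) (hαβ : α ^ 2 + β ^ 2 = 1) (hβ : 0 ≤ β) :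
    α • e + β • J e = α • e + β • y
      ∧ (∀ v, ⟪v, e⟫ = 0 → ⟪α • v + β • J v, α • e + β • y⟫ = 0) := by
  refine ⟨by rw [hJe], fun v hv => ?_⟩
  have h1 : ⟪J v, y⟫ = 0 := by rw [← hJe, horth]; exact hv
  have h2 : ⟪J v, e⟫ = -⟪v, y⟫ := by
    have := horth v y
    rw [hJy, inner_neg_right] at this
    linarith
  rw [inner_add_left, inner_smul_left, inner_smul_left, inner_add_right,
    inner_add_right, inner_smul_right, inner_smul_right, inner_smul_right,
    inner_smul_right, hv, h1, h2]
  simp only [starRingEnd_apply, star_trivial]; ring
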